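/- For all integers i ≥ 1 and k ≥ 1, put d = 2i(2k+1) and w = (w_0,…,w_4) = (1, 2i, i(2k+1), i(2k+1), i(2k+1)). Then: (a) the polynomial f_i = z_0^{2i(2k+1)} + z_1^{2k+1} + z_2^2 + z_3^2 + z_4^2 ∈ ℂ[z_0,…,z_4] is weighted homogeneous of degree d with weights w; (b) the index I = (w_0+w_1+w_2+w_3+w_4) − d equals 2ik + 3i + 1; and (c) I > 4 = n · min_i w_i (here n = 4 and min_i w_i = 1), so the Lichnerowicz obstruction I > n·min_i w_i holds for every member of this family. -/

import Mathlib

lemma X_pow_whom {σ : Type*} (w : σ → ℕ) (j : σ) (e : ℕ) :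
    MvPolynomial.IsWeightedHomogeneous w ((MvPolynomial.X j : MvPolynomial σ ℂ) ^ e)
      (e * w j) := by
  rw [MvPolynomial.X_pow_eq_monomial]
  apply MvPolynomial.isWeightedHomogeneous_monomial
  simp [Finsupp.weight, Finsupp.linearCombination_single, smul_eq_mul, mul_comm]

/-- **The Durfee–Kauffman family and the Lichnerowicz obstruction.**
For integers `i, k ≥ 1`, put `d = 2i(2k+1)` and `w = (1, 2i, i(2k+1), i(2k+1), i(2k+1))`.
Then (a) `f_i = z_0^{2i(2k+1)} + z_1^{2k+1} + z_2^2 + z_3^2 + z_4^2` is weighted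
homogeneous of degree `d` with weights `w`; (b) the index `I = |w| − d` equals
`2ik + 3i + 1`; and (c) `min_j w_j = 1` and `I > 4 · min_j w_j = n · min_j w_j`
(here `n = 4`), so the Lichnerowicz obstruction holds. -/
theorem durfee_kauffman_lichnerowicz_obstruction (i k : ℕ) (hi : 1 ≤ i) (hk : 1 ≤ k) :
    MvPolynomial.IsWeightedHomogeneous
      (![1, 2 * i, i * (2 * k + 1), i * (2 * k + 1), i * (2 * k + 1)] : Fin 5 → ℕ)
      ((MvPolynomial.X 0) ^ (2 * i * (2 * k + 1)) + (MvPolynomial.X 1) ^ (2 * k + 1) +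
        (MvPolynomial.X 2) ^ 2 + (MvPolynomial.X 3) ^ 2 + (MvPolynomial.X 4) ^ 2 :
        MvPolynomial (Fin 5) ℂ)
      (2 * i * (2 * k + 1)) ∧
    (∑ j, (![1, 2 * i, i * (2 * k + 1), i * (2 * k + 1), i * (2 * k + 1)] : Fin 5 → ℕ) j)
        - 2 * i * (2 * k + 1) = 2 * i * k + 3 * i + 1 ∧
    Finset.univ.inf' Finset.univ_nonempty
        (![1, 2 * i, i * (2 * k + 1), i * (2 * k + 1), i * (2 * k + 1)] : Fin 5 → ℕ) = 1 ∧
    4 * Finset.univ.inf' Finset.univ_nonempty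
        (![1, 2 * i, i * (2 * k + 1), i * (2 * k + 1), i * (2 * k + 1)] : Fin 5 → ℕ)
      < (∑ j, (![1, 2 * i, i * (2 * k + 1), i * (2 * k + 1), i * (2 * k + 1)] : Fin 5 → ℕ) j)
          - 2 * i * (2 * k + 1) := by
  set w : Fin 5 → ℕ := ![1, 2 * i, i * (2 * k + 1), i * (2 * k + 1), i * (2 * k + 1)] with hw
  have hsum : (∑ j, w j) = 1 + 2 * i + 3 * (i * (2 * k + 1)) := by
    simp [hw, Fin.sum_univ_five]; ring
  have hidx : (∑ j, w j) - 2 * i * (2 * k + 1) = 2 * i * k + 3 * i + 1 := by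
    have h2 : (2 * i * k + 3 * i + 1) + 2 * i * (2 * k + 1) = 1 + 2 * i + 3 * (i * (2 * k + 1)) := by ring
    omega
  have hinf : Finset.univ.inf' Finset.univ_nonempty w = 1 := by
    apply le_antisymm
    · exact Finset.inf'_le _ (Finset.mem_univ (0 : Fin 5))
    · apply Finset.le_inf'
      intro j _
      fin_cases j <;> simp [hw] <;> nlinarith
  refine ⟨?_, hidx, hinf, ?_⟩
  · have h0 := X_pow_whom w 0 (2 * i * (2 * k + 1))
    have h1 := X_pow_whom w 1 (2 * k + 1)
    have h2 := X_pow_whom w 2 2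
    have h3 := X_pow_whom w 3 2
    have h4 := X_pow_whom w 4 2
    simp only [hw] at h0 h1 h2 h3 h4
    norm_num [Matrix.cons_val_zero, Matrix.cons_val_one] at h0 h1 h2 h3 h4
    have e1 : (2 * k + 1) * (2 * i) = 2 * i * (2 * k + 1) := by ring
    have e2 : 2 * (i * (2 * k + 1)) = 2 * i * (2 * k + 1) := by ring
    rw [e1] at h1
    change MvPolynomial.IsWeightedHomogeneous _ _ (2 * (i * (2 * k + 1))) at h2 h3 h4
    rw [e2] at h2 h3 h4
    exact ((((h0.add h1).add h2).add h3).add h4)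
  · rw [hinf, hidx]; nlinarith
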